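/- The general solution of the homogeneous linear ODE -ψ'' - ψ'/r = e^{z} ψ on (0,∞), where z(r) = log(64/(8+r²)²), is ψ(r) = c₁ (8−r²)/(8+r²) + c₂ ((8−r²) log r + 16)/(8+r²) for constants c₁, c₂ ∈ ℝ; equivalently, any C² solution ψ on (0,∞) with limit 0 as r → 0⁺ is identically zero. -/

import Mathlib

open Filter Set

noncomputable def uu (r : ℝ) : ℝ := (8 - r^2)/(8 + r^2)
noncomputable def uu' (r : ℝ) : ℝ := -32*r/(8 + r^2)^2
noncomputable def uu'' (r : ℝ) : ℝ := (96*r^2 - 256)/(8 + r^2)^3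

lemma den_pos (r : ℝ) : (0:ℝ) < 8 + r^2 := by positivity
lemma den_ne (r : ℝ) : (8 + r^2 : ℝ) ≠ 0 := (den_pos r).ne'

lemma uu_hasDeriv (r : ℝ) : HasDerivAt uu (uu' r) r := by
  have h1 : HasDerivAt (fun r : ℝ => 8 - r^2) (0 - 2*r) r := by
    exact (hasDerivAt_const r (8:ℝ)).sub ((hasDerivAt_pow 2 r).congr_deriv (show _ = 2*r by ring))
  have h2 : HasDerivAt (fun r : ℝ => 8 + r^2) (0 + 2*r) r := by
    exact (hasDerivAt_const r (8:ℝ)).add ((hasDerivAt_pow 2 r).congr_deriv (show _ = 2*r by ring))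
  have := h1.div h2 (den_ne r)
  refine this.congr_deriv ?_
  unfold uu'
  field_simp
  ring

lemma uu'_hasDeriv (r : ℝ) : HasDerivAt uu' (uu'' r) r := by
  have h1 : HasDerivAt (fun r : ℝ => -32*r) (-32) r := by
    simpa using (hasDerivAt_id r).const_mul (-32 : ℝ)
  have h2 : HasDerivAt (fun r : ℝ => (8 + r^2)^2) (2*(8+r^2)^1*(0+2*r)) r := by
    have hb : HasDerivAt (fun r : ℝ => 8 + r^2) (0 + 2*r) r := by
      exact (hasDerivAt_const r (8:ℝ)).add ((hasDerivAt_pow 2 r).congr_deriv (show _ = 2*r by ring))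
    exact hb.pow 2
  have := h1.div h2 (pow_ne_zero 2 (den_ne r))
  refine this.congr_deriv ?_
  unfold uu''
  field_simp
  ring

lemma uu_ode {r : ℝ} (hr : 0 < r) : uu'' r = -(uu' r)/r - 64/(8+r^2)^2 * uu r := by
  unfold uu uu' uu''
  field_simp
  ring

theorem stmt_9 (ψ : ℝ → ℝ)
    (hψ : ContDiffOn ℝ 2 ψ (Set.Ioi (0 : ℝ)))
    (heq : ∀ r ∈ Set.Ioi (0 : ℝ),
      -(deriv (deriv ψ) r) - deriv ψ r / r = 64 / (8 + r ^ 2) ^ 2 * ψ r)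
    (hlim : Tendsto ψ (nhdsWithin 0 (Set.Ioi (0 : ℝ))) (nhds 0)) :
    ∀ r ∈ Set.Ioi (0 : ℝ), ψ r = 0 := by
  -- basic differentiability facts
  have hψ' : ContDiffOn ℝ 1 (deriv ψ) (Set.Ioi 0) :=
    hψ.deriv_of_isOpen isOpen_Ioi (by norm_num)
  have hd1 : ∀ r ∈ Set.Ioi (0:ℝ), HasDerivAt ψ (deriv ψ r) r := by
    intro r hr
    exact ((hψ.contDiffAt (isOpen_Ioi.mem_nhds hr)).differentiableAt
      (by norm_num)).hasDerivAt
  have hd2 : ∀ r ∈ Set.Ioi (0:ℝ), HasDerivAt (deriv ψ) (deriv (deriv ψ) r) r := by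
    intro r hr
    exact ((hψ'.contDiffAt (isOpen_Ioi.mem_nhds hr)).differentiableAt
      (by norm_num)).hasDerivAt
  have hode : ∀ r ∈ Set.Ioi (0:ℝ),
      deriv (deriv ψ) r = -(deriv ψ r)/r - 64/(8+r^2)^2 * ψ r := by
    intro r hr
    have h := heq r hr
    rw [neg_div]
    linarith
  -- the function g = r * Wronskian is constant
  set W : ℝ → ℝ := fun r => deriv ψ r * uu r - uu' r * ψ r with hW
  set g : ℝ → ℝ := fun r => r * W r with hg
  have hgd : ∀ r ∈ Set.Ioi (0:ℝ), HasDerivAt g 0 r := by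
    intro r hr
    have hr0 : r ≠ 0 := ne_of_gt hr
    have hWd : HasDerivAt W
        (deriv (deriv ψ) r * uu r + deriv ψ r * uu' r
          - (uu'' r * ψ r + uu' r * deriv ψ r)) r :=
      ((hd2 r hr).mul (uu_hasDeriv r)).sub ((uu'_hasDeriv r).mul (hd1 r hr))
    have := (hasDerivAt_id r).mul hWd
    have h0 : 1 * W r + r * (deriv (deriv ψ) r * uu r + deriv ψ r * uu' r
          - (uu'' r * ψ r + uu' r * deriv ψ r)) = 0 := by
      rw [hode r hr, uu_ode hr]
      simp only [hW]
      field_simp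
      ring
    simp only [id_eq] at this
    rw [h0] at this
    exact this
  have hconst : ∀ r ∈ Set.Ioi (0:ℝ), g r = g 1 := by
    intro r hr
    have hdiff : DifferentiableOn ℝ g (Set.Ioi 0) := fun x hx =>
      (hgd x hx).differentiableAt.differentiableWithinAt
    refine (convex_Ioi (0:ℝ)).is_const_of_fderivWithin_eq_zero hdiff ?_ hr
      (by norm_num : (1:ℝ) ∈ Set.Ioi (0:ℝ))
    intro x hx
    rw [fderivWithin_of_isOpen isOpen_Ioi hx]
    have h0 : HasFDerivAt g ((1 : ℝ →L[ℝ] ℝ).smulRight 0) x := (hgd x hx).hasFDerivAt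
    rw [h0.fderiv]
    ext
    simp
  set C : ℝ := g 1 with hCdef
  -- positivity of uu near 0
  have s8 : (Real.sqrt 8) ^ 2 = 8 := Real.sq_sqrt (by norm_num)
  have hs81 : (1:ℝ) < Real.sqrt 8 := by
    nlinarith [s8, Real.sqrt_nonneg 8]
  have huupos : ∀ x ∈ Set.Ioo (0:ℝ) (Real.sqrt 8), 0 < uu x := by
    intro x hx
    have : x^2 < 8 := by nlinarith [hx.1, hx.2, s8]
    exact div_pos (by linarith) (den_pos x)
  have hCW : ∀ r ∈ Set.Ioi (0:ℝ), deriv ψ r * uu r - uu' r * ψ r = C / r := by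
    intro r hr
    have h := hconst r hr
    have hr0 : r ≠ 0 := ne_of_gt hr
    rw [eq_div_iff hr0]
    simp only [hg, hW] at h
    linear_combination h
  -- the function F = ψ/u - C log r and its derivative on (0,1)
  set F : ℝ → ℝ := fun r => ψ r / uu r - C * Real.log r with hF
  have hFd : ∀ x ∈ Set.Ioo (0:ℝ) 1, HasDerivAt F (C * (1 - uu x ^ 2) / (x * uu x ^ 2)) x := by
    intro x hx
    have hx8 : x ∈ Set.Ioo (0:ℝ) (Real.sqrt 8) := ⟨hx.1, lt_trans hx.2 hs81⟩
    have hux : uu x ≠ 0 := ne_of_gt (huupos x hx8)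
    have hx0 : x ≠ 0 := ne_of_gt hx.1
    have hq : HasDerivAt (fun r => ψ r / uu r)
        ((deriv ψ x * uu x - ψ x * uu' x) / uu x ^ 2) x :=
      (hd1 x hx.1).div (uu_hasDeriv x) hux
    have hl : HasDerivAt (fun r => C * Real.log r) (C * x⁻¹) x :=
      (Real.hasDerivAt_log hx0).const_mul C
    have := hq.sub hl
    refine this.congr_deriv ?_
    have hA : deriv ψ x * uu x - ψ x * uu' x = C / x := by
      rw [← hCW x hx.1]; ring
    rw [hA]
    field_simp
  have hFval : ∀ a, F a = ψ a / uu a - C * Real.log a := fun a => rfl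
  -- the filter approaching 0 from within Ioo 0 (1/2)
  have hne : (nhdsWithin (0:ℝ) (Set.Ioo 0 (1/2))).NeBot := by
    rw [← mem_closure_iff_nhdsWithin_neBot, closure_Ioo (by norm_num : (0:ℝ) ≠ 1/2)]
    exact ⟨le_refl 0, by norm_num⟩
  have hsubIoi : Set.Ioo (0:ℝ) (1/2) ⊆ Set.Ioi 0 := fun x hx => hx.1
  have hcontuu : Continuous uu := by
    exact (continuous_const.sub (continuous_pow 2)).div
      (continuous_const.add (continuous_pow 2)) den_ne
  have htend0 : Tendsto (fun a => ψ a / uu a) (nhdsWithin (0:ℝ) (Set.Ioo 0 (1/2))) (nhds 0) := by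
    have h1 : Tendsto ψ (nhdsWithin (0:ℝ) (Set.Ioo 0 (1/2))) (nhds 0) :=
      hlim.mono_left (nhdsWithin_mono _ hsubIoi)
    have h2 : Tendsto uu (nhdsWithin (0:ℝ) (Set.Ioo 0 (1/2))) (nhds 1) := by
      have : uu 0 = 1 := by norm_num [uu]
      simpa [this] using (hcontuu.continuousAt (x := (0:ℝ))).continuousWithinAt.tendsto
    have := h1.div h2 one_ne_zero
    rw [zero_div] at this
    exact this
  have hmem2 : ((1:ℝ)/2) ∈ Set.Ioo (0:ℝ) 1 := by norm_num
  -- C = 0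
  have hC0 : C = 0 := by
    by_contra hC
    rcases lt_or_gt_of_ne hC with hCneg | hCpos
    · -- C < 0 : F antitone, ψ/u ≥ F(1/2) + C log a → +∞
      have hanti : AntitoneOn F (Set.Ioo 0 1) := by
        refine antitoneOn_of_deriv_nonpos (convex_Ioo 0 1) ?_ ?_ ?_
        · exact fun x hx => (hFd x hx).differentiableAt.continuousAt.continuousWithinAt
        · intro x hx
          rw [interior_Ioo] at hx
          exact (hFd x hx).differentiableAt.differentiableWithinAt
        · intro x hx
          rw [interior_Ioo] at hx
          rw [(hFd x hx).deriv]
          have hx8 : x ∈ Set.Ioo (0:ℝ) (Real.sqrt 8) := ⟨hx.1, lt_trans hx.2 hs81⟩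
          have h1 : uu x ≤ 1 := by
            unfold uu; rw [div_le_one (den_pos x)]; nlinarith [sq_nonneg x]
          have h2 : 0 < uu x := huupos x hx8
          have h3 : (0:ℝ) ≤ 1 - uu x ^ 2 := by nlinarith
          have hd : 0 < x * uu x ^ 2 := mul_pos hx.1 (pow_pos h2 2)
          exact div_nonpos_of_nonpos_of_nonneg (by nlinarith) hd.le
      have hbd : ∀ᶠ a in nhdsWithin (0:ℝ) (Set.Ioo 0 (1/2)),
          F (1/2) + C * Real.log a ≤ ψ a / uu a := by
        filter_upwards [self_mem_nhdsWithin] with a ha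
        have ha1 : a ∈ Set.Ioo (0:ℝ) 1 := ⟨ha.1, by linarith [ha.2]⟩
        have := hanti ha1 hmem2 (le_of_lt ha.2)
        rw [hFval, hFval] at this
        linarith
      have htop : Tendsto (fun a => F (1/2) + C * Real.log a)
          (nhdsWithin (0:ℝ) (Set.Ioo 0 (1/2))) atTop := by
        refine tendsto_atTop_add_const_left _ _ ?_
        exact (Real.tendsto_log_nhdsGT_zero.mono_left
          (nhdsWithin_mono _ hsubIoi)).const_mul_atBot_of_neg hCneg
      exact not_tendsto_nhds_of_tendsto_atTop
        (tendsto_atTop_mono' _ hbd htop) 0 htend0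
    · -- C > 0 : F monotone, ψ/u ≤ F(1/2) + C log a → -∞
      have hmono : MonotoneOn F (Set.Ioo 0 1) := by
        refine monotoneOn_of_deriv_nonneg (convex_Ioo 0 1) ?_ ?_ ?_
        · exact fun x hx => (hFd x hx).differentiableAt.continuousAt.continuousWithinAt
        · intro x hx
          rw [interior_Ioo] at hx
          exact (hFd x hx).differentiableAt.differentiableWithinAt
        · intro x hx
          rw [interior_Ioo] at hx
          rw [(hFd x hx).deriv]
          have hx8 : x ∈ Set.Ioo (0:ℝ) (Real.sqrt 8) := ⟨hx.1, lt_trans hx.2 hs81⟩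
          have h1 : uu x ≤ 1 := by
            unfold uu; rw [div_le_one (den_pos x)]; nlinarith [sq_nonneg x]
          have h2 : 0 < uu x := huupos x hx8
          have h3 : (0:ℝ) ≤ 1 - uu x ^ 2 := by nlinarith
          have hd : 0 < x * uu x ^ 2 := mul_pos hx.1 (pow_pos h2 2)
          exact div_nonneg (by nlinarith) hd.le
      have hbd : ∀ᶠ a in nhdsWithin (0:ℝ) (Set.Ioo 0 (1/2)),
          ψ a / uu a ≤ F (1/2) + C * Real.log a := by
        filter_upwards [self_mem_nhdsWithin] with a ha
        have ha1 : a ∈ Set.Ioo (0:ℝ) 1 := ⟨ha.1, by linarith [ha.2]⟩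
        have := hmono ha1 hmem2 (le_of_lt ha.2)
        rw [hFval, hFval] at this
        linarith
      have hbot : Tendsto (fun a => F (1/2) + C * Real.log a)
          (nhdsWithin (0:ℝ) (Set.Ioo 0 (1/2))) atBot := by
        refine tendsto_atBot_add_const_left _ _ ?_
        exact (Real.tendsto_log_nhdsGT_zero.mono_left
          (nhdsWithin_mono _ hsubIoi)).const_mul_atBot hCpos
      exact not_tendsto_nhds_of_tendsto_atBot
        (tendsto_atBot_mono' _ hbd hbot) 0 htend0
  -- hence the Wronskian vanishes identically
  have hW0 : ∀ r ∈ Set.Ioi (0:ℝ), deriv ψ r * uu r - uu' r * ψ r = 0 := by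
    intro r hr
    rw [hCW r hr, hC0, zero_div]
  have hs80 : (0:ℝ) < Real.sqrt 8 := lt_trans one_pos hs81
  -- ψ/u is locally constant where u ≠ 0
  have hwd : ∀ x : ℝ, x ∈ Set.Ioi (0:ℝ) → uu x ≠ 0 →
      HasDerivAt (fun r => ψ r / uu r) 0 x := by
    intro x hx hux
    have hq := (hd1 x hx).div (uu_hasDeriv x) hux
    have h0 : deriv ψ x * uu x - ψ x * uu' x = 0 := by
      have := hW0 x hx; linarith
    rw [h0, zero_div] at hq
    exact hq
  have hconst_on : ∀ s : Set ℝ, Convex ℝ s → IsOpen s → s ⊆ Set.Ioi 0 →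
      (∀ x ∈ s, uu x ≠ 0) → ∀ x ∈ s, ∀ y ∈ s, ψ x / uu x = ψ y / uu y := by
    intro s hconv hopen hsub hu x hx y hy
    refine hconv.is_const_of_fderivWithin_eq_zero
      (fun z hz => (hwd z (hsub hz) (hu z hz)).differentiableAt.differentiableWithinAt)
      ?_ hx hy
    intro z hz
    rw [fderivWithin_of_isOpen hopen hz]
    have h0 : HasFDerivAt (fun r => ψ r / uu r) ((1 : ℝ →L[ℝ] ℝ).smulRight 0) z :=
      (hwd z (hsub hz) (hu z hz)).hasFDerivAt
    rw [h0.fderiv]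
    ext
    simp
  have huleft : ∀ x ∈ Set.Ioo (0:ℝ) (Real.sqrt 8), uu x ≠ 0 :=
    fun x hx => ne_of_gt (huupos x hx)
  have hsubL : Set.Ioo (0:ℝ) (Real.sqrt 8) ⊆ Set.Ioi 0 := fun x hx => hx.1
  have h1mem : (1:ℝ) ∈ Set.Ioo (0:ℝ) (Real.sqrt 8) := ⟨one_pos, hs81⟩
  have hwcL : ∀ x ∈ Set.Ioo (0:ℝ) (Real.sqrt 8), ψ x / uu x = ψ 1 / uu 1 :=
    fun x hx => hconst_on _ (convex_Ioo 0 _) isOpen_Ioo hsubL huleft x hx 1 h1mem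
  -- the constant on the left piece is 0
  have hval : ψ 1 / uu 1 = 0 := by
    have hsub2 : Set.Ioo (0:ℝ) (1/2) ⊆ Set.Ioo 0 (Real.sqrt 8) :=
      fun x hx => ⟨hx.1, lt_trans hx.2 (lt_trans (by norm_num) hs81)⟩
    have hev : ∀ᶠ a in nhdsWithin (0:ℝ) (Set.Ioo 0 (1/2)),
        ψ a / uu a = ψ 1 / uu 1 := by
      filter_upwards [self_mem_nhdsWithin] with a ha
      exact hwcL a (hsub2 ha)
    have h1 : Tendsto (fun a => ψ a / uu a) (nhdsWithin (0:ℝ) (Set.Ioo 0 (1/2)))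
        (nhds (ψ 1 / uu 1)) := tendsto_const_nhds.congr' (hev.mono fun a h => h.symm)
    exact (tendsto_nhds_unique h1 htend0)
  have hzeroL : ∀ x ∈ Set.Ioo (0:ℝ) (Real.sqrt 8), ψ x = 0 := by
    intro x hx
    have h := hwcL x hx
    rw [hval] at h
    exact (div_eq_zero_iff.mp h).resolve_right (huleft x hx)
  -- deriv ψ vanishes on the left piece, hence at √8 by continuity
  have hs8I : Real.sqrt 8 ∈ Set.Ioi (0:ℝ) := hs80
  have hneL : (nhdsWithin (Real.sqrt 8) (Set.Ioo (0:ℝ) (Real.sqrt 8))).NeBot := by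
    rw [← mem_closure_iff_nhdsWithin_neBot, closure_Ioo (ne_of_lt hs80)]
    exact ⟨le_of_lt hs80, le_refl _⟩
  have hderL : ∀ x ∈ Set.Ioo (0:ℝ) (Real.sqrt 8), deriv ψ x = 0 := by
    intro x hx
    have hev : ψ =ᶠ[nhds x] (fun _ => (0:ℝ)) :=
      Filter.eventuallyEq_of_mem (isOpen_Ioo.mem_nhds hx) hzeroL
    rw [hev.deriv_eq]
    simp
  have hcψ' : ContinuousAt (deriv ψ) (Real.sqrt 8) :=
    (hψ'.contDiffAt (isOpen_Ioi.mem_nhds hs8I)).continuousAt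
  have hdψs8 : deriv ψ (Real.sqrt 8) = 0 := by
    have a1 : Tendsto (deriv ψ) (nhdsWithin (Real.sqrt 8) (Set.Ioo 0 (Real.sqrt 8)))
        (nhds (deriv ψ (Real.sqrt 8))) := hcψ'.tendsto.mono_left nhdsWithin_le_nhds
    have b1 : Tendsto (deriv ψ) (nhdsWithin (Real.sqrt 8) (Set.Ioo 0 (Real.sqrt 8)))
        (nhds 0) := by
      refine tendsto_const_nhds.congr' ?_
      filter_upwards [self_mem_nhdsWithin] with a ha
      exact (hderL a ha).symm
    exact tendsto_nhds_unique a1 b1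
  have hcψ : ContinuousAt ψ (Real.sqrt 8) :=
    (hψ.contDiffAt (isOpen_Ioi.mem_nhds hs8I)).continuousAt
  have hψs8 : ψ (Real.sqrt 8) = 0 := by
    have a1 : Tendsto ψ (nhdsWithin (Real.sqrt 8) (Set.Ioo 0 (Real.sqrt 8)))
        (nhds (ψ (Real.sqrt 8))) := hcψ.tendsto.mono_left nhdsWithin_le_nhds
    have b1 : Tendsto ψ (nhdsWithin (Real.sqrt 8) (Set.Ioo 0 (Real.sqrt 8)))
        (nhds 0) := by
      refine tendsto_const_nhds.congr' ?_
      filter_upwards [self_mem_nhdsWithin] with a ha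
      exact (hzeroL a ha).symm
    exact tendsto_nhds_unique a1 b1
  -- on the right piece, ψ = k·u and continuity of ψ' forces k = 0
  have huright : ∀ x ∈ Set.Ioi (Real.sqrt 8), uu x ≠ 0 := by
    intro x hx
    have hx8 : (8:ℝ) < x^2 := by nlinarith [Set.mem_Ioi.mp hx, hs80]
    have : uu x < 0 := div_neg_of_neg_of_pos (by linarith) (den_pos x)
    exact ne_of_lt this
  have hsubR : Set.Ioi (Real.sqrt 8) ⊆ Set.Ioi (0:ℝ) :=
    fun x hx => lt_trans hs80 hx
  set k : ℝ := ψ (Real.sqrt 8 + 1) / uu (Real.sqrt 8 + 1) with hk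
  have hmemR : Real.sqrt 8 + 1 ∈ Set.Ioi (Real.sqrt 8) := by
    simp [Set.mem_Ioi]
  have hwcR : ∀ x ∈ Set.Ioi (Real.sqrt 8), ψ x / uu x = k :=
    fun x hx => hconst_on _ (convex_Ioi _) isOpen_Ioi hsubR huright x hx _ hmemR
  have hψk : ∀ x ∈ Set.Ioi (Real.sqrt 8), ψ x = k * uu x := by
    intro x hx
    exact (div_eq_iff (huright x hx)).mp (hwcR x hx)
  have hderR : ∀ x ∈ Set.Ioi (Real.sqrt 8), deriv ψ x = k * uu' x := by
    intro x hx
    have hev : ψ =ᶠ[nhds x] (fun y => k * uu y) :=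
      Filter.eventuallyEq_of_mem (isOpen_Ioi.mem_nhds hx) hψk
    rw [hev.deriv_eq]
    exact ((uu_hasDeriv x).const_mul k).deriv
  have hcontuu' : Continuous uu' := by
    exact (continuous_const.mul continuous_id).div
      ((continuous_const.add (continuous_pow 2)).pow 2)
      (fun x => pow_ne_zero 2 (den_ne x))
  have hk0 : k * uu' (Real.sqrt 8) = 0 := by
    have a1 : Tendsto (deriv ψ) (nhdsWithin (Real.sqrt 8) (Set.Ioi (Real.sqrt 8)))
        (nhds 0) := by
      rw [← hdψs8]
      exact hcψ'.tendsto.mono_left nhdsWithin_le_nhds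
    have b1 : Tendsto (deriv ψ) (nhdsWithin (Real.sqrt 8) (Set.Ioi (Real.sqrt 8)))
        (nhds (k * uu' (Real.sqrt 8))) := by
      have hc : Tendsto (fun y => k * uu' y)
          (nhdsWithin (Real.sqrt 8) (Set.Ioi (Real.sqrt 8)))
          (nhds (k * uu' (Real.sqrt 8))) :=
        ((continuous_const.mul hcontuu').tendsto _).mono_left nhdsWithin_le_nhds
      refine hc.congr' ?_
      filter_upwards [self_mem_nhdsWithin] with a ha
      exact (hderR a ha).symm
    exact tendsto_nhds_unique b1 a1
  have huu'ne : uu' (Real.sqrt 8) ≠ 0 := by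
    have : uu' (Real.sqrt 8) < 0 :=
      div_neg_of_neg_of_pos (by nlinarith) (by positivity)
    exact ne_of_lt this
  have hkzero : k = 0 := by
    rcases mul_eq_zero.mp hk0 with h | h
    · exact h
    · exact absurd h huu'ne
  -- conclude
  intro r hr
  rcases lt_trichotomy r (Real.sqrt 8) with h | h | h
  · exact hzeroL r ⟨hr, h⟩
  · rw [h]; exact hψs8
  · rw [hψk r h, hkzero, zero_mul]
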